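/- Let σ > 0 and R an n×n real upper triangular matrix with positive diagonal entries r_{ii}. Then (det R/((√(2π)σ)ⁿ)) ∫_{[-1/2,1/2]ⁿ} exp(-‖Rξ‖₂²/(2σ²)) dξ ≤ ∏_{i=1}^n φ_σ(r_{ii}), where φ_σ(ζ) = erf(ζ/(2√2 σ)). -/

import Mathlib

open MeasureTheory Real Finset

/-- The Gauss error function `erf x = (2/√π) ∫_0^x exp(-t²) dt`. -/
noncomputable def erf (x : ℝ) : ℝ :=
  (2 / Real.sqrt Real.pi) * ∫ t in (0 : ℝ)..x, Real.exp (-t ^ 2)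

/-- `φ_σ(ζ) = erf (ζ / (2√2 σ))`. -/
noncomputable def phi (σ ζ : ℝ) : ℝ := erf (ζ / (2 * Real.sqrt 2 * σ))

lemma gauss_shift (σ : ℝ) (hσ : 0 < σ) (a : ℝ) (ha : 0 ≤ a) (b : ℝ) :
    (∫ s in (b - a)..(b + a), Real.exp (-s ^ 2 / (2 * σ ^ 2)))
      ≤ ∫ s in (-a)..a, Real.exp (-s ^ 2 / (2 * σ ^ 2)) := by
  set g : ℝ → ℝ := fun s => Real.exp (-s ^ 2 / (2 * σ ^ 2)) with hg
  have hgc : Continuous g := by continuity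
  set H : ℝ → ℝ := fun b => (∫ s in (0:ℝ)..(b + a), g s) - ∫ s in (0:ℝ)..(b - a), g s with hH
  have hHeq : ∀ b, (∫ s in (b - a)..(b + a), g s) = H b := fun b =>
    (intervalIntegral.integral_interval_sub_left (hgc.intervalIntegrable _ _)
      (hgc.intervalIntegrable _ _)).symm
  have hderiv : ∀ x, HasDerivAt H (g (x + a) - g (x - a)) x := by
    intro x
    have h1 : HasDerivAt (fun b => ∫ s in (0:ℝ)..(b + a), g s) (g (x + a)) x := by
      have := (intervalIntegral.integral_hasDerivAt_right (hgc.intervalIntegrable 0 (x + a))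
        (hgc.stronglyMeasurableAtFilter _ _) hgc.continuousAt)
      simpa [Function.comp_def] using this.comp x ((hasDerivAt_id x).add_const a)
    have h2 : HasDerivAt (fun b => ∫ s in (0:ℝ)..(b - a), g s) (g (x - a)) x := by
      have := (intervalIntegral.integral_hasDerivAt_right (hgc.intervalIntegrable 0 (x - a))
        (hgc.stronglyMeasurableAtFilter _ _) hgc.continuousAt)
      simpa [Function.comp_def] using this.comp x ((hasDerivAt_id x).sub_const a)
    exact h1.sub h2
  have hflip : ∀ u v : ℝ, (∫ s in u..v, g s) = ∫ s in (-v)..(-u), g s := by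
    intro u v
    rw [← intervalIntegral.integral_comp_neg g]
    congr 1 with s
    simp [hg, neg_pow]
  have heven : ∀ b, H (-b) = H b := by
    intro b
    rw [← hHeq, ← hHeq b, hflip (b - a) (b + a)]
    have h1 : -(b + a) = -b - a := by ring
    have h2 : -(b - a) = -b + a := by ring
    rw [h1, h2]
  have hcont : Continuous H := continuous_iff_continuousAt.mpr fun x => (hderiv x).continuousAt
  have hanti : AntitoneOn H (Set.Ici 0) := by
    apply antitoneOn_of_deriv_nonpos (convex_Ici 0) hcont.continuousOn
      (fun x _ => (hderiv x).differentiableAt.differentiableWithinAt)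
    intro x hx
    rw [(hderiv x).deriv]
    have hx0 : 0 ≤ x := le_of_lt (by simpa using hx)
    have hsq : (x - a) ^ 2 ≤ (x + a) ^ 2 := by nlinarith
    have : g (x + a) ≤ g (x - a) := by
      apply Real.exp_le_exp.mpr
      apply div_le_div_of_nonneg_right (by linarith) (by positivity)
    linarith
  have hb : H b ≤ H 0 := by
    rcases le_total 0 b with h | h
    · exact hanti (by simp) (by simpa using h) h
    · rw [← heven b] at *
      exact hanti (by simp) (by simp [neg_nonneg.mpr h]) (by simpa using h)
  calc (∫ s in (b - a)..(b + a), g s) = H b := hHeq b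
    _ ≤ H 0 := hb
    _ = ∫ s in (-a)..a, g s := by rw [← hHeq 0]; norm_num


lemma icc_ii (f : ℝ → ℝ) : ∫ t in Set.Icc (-(1/2):ℝ) (1/2), f t
    = ∫ t in (-(1/2):ℝ)..(1/2), f t := by
  rw [intervalIntegral.integral_of_le (by norm_num), integral_Icc_eq_integral_Ioc]

lemma shift' (σ : ℝ) (hσ : 0 < σ) (a : ℝ) (ha : 0 < a) (b : ℝ) :
    (∫ t in Set.Icc (-(1/2):ℝ) (1/2), Real.exp (-(a * t + b) ^ 2 / (2 * σ ^ 2)))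
      ≤ ∫ t in Set.Icc (-(1/2):ℝ) (1/2), Real.exp (-(a * t) ^ 2 / (2 * σ ^ 2)) := by
  rw [icc_ii, icc_ii]
  have h1 := intervalIntegral.integral_comp_mul_add
    (fun s => Real.exp (-s ^ 2 / (2 * σ ^ 2))) (a := -(1/2)) (b := 1/2) (ne_of_gt ha) b
  have h2 := intervalIntegral.integral_comp_mul_add
    (fun s => Real.exp (-s ^ 2 / (2 * σ ^ 2))) (a := -(1/2)) (b := 1/2) (ne_of_gt ha) 0
  simp only [smul_eq_mul] at h1 h2
  have e1 : a * (-(1/2)) + b = b - a/2 := by ring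
  have e2 : a * (1/2) + b = b + a/2 := by ring
  have e3 : a * (-(1/2)) + 0 = -(a/2) := by ring
  have e4 : a * (1/2) + 0 = a/2 := by ring
  rw [e1, e2] at h1
  rw [e3, e4] at h2
  have h2' : (∫ t in (-(1/2):ℝ)..(1/2), Real.exp (-(a * t) ^ 2 / (2 * σ ^ 2)))
      = a⁻¹ * ∫ s in (-(a/2))..(a/2), Real.exp (-s ^ 2 / (2 * σ ^ 2)) := by
    rw [← h2]; congr 1 with t; ring_nf
  have h1' : (∫ t in (-(1/2):ℝ)..(1/2), Real.exp (-(a * t + b) ^ 2 / (2 * σ ^ 2)))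
      = a⁻¹ * ∫ s in (b - a/2)..(b + a/2), Real.exp (-s ^ 2 / (2 * σ ^ 2)) := h1
  rw [h1', h2']
  exact mul_le_mul_of_nonneg_left (gauss_shift σ hσ (a/2) (by linarith) b)
    (by positivity)

lemma phi_eq (σ : ℝ) (hσ : 0 < σ) (r : ℝ) (hr : 0 < r) :
    (r / (Real.sqrt (2 * Real.pi) * σ)) *
      ∫ t in Set.Icc (-(1/2):ℝ) (1/2), Real.exp (-(r * t) ^ 2 / (2 * σ ^ 2))
    = phi σ r := by
  have hs2 : (0:ℝ) < Real.sqrt 2 := Real.sqrt_pos.mpr (by norm_num)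
  have hspi : (0:ℝ) < Real.sqrt Real.pi := Real.sqrt_pos.mpr Real.pi_pos
  set c : ℝ := Real.sqrt 2 * σ with hc
  have hcpos : 0 < c := by positivity
  have hcsq : c ^ 2 = 2 * σ ^ 2 := by
    rw [hc, mul_pow, sq_sqrt (by norm_num : (0:ℝ) ≤ 2)]
  set x₀ : ℝ := r / (2 * Real.sqrt 2 * σ) with hx₀
  have h1 : (∫ t in (-(1/2):ℝ)..(1/2), Real.exp (-(r * t) ^ 2 / (2 * σ ^ 2)))
      = r⁻¹ * ∫ s in (-(r/2))..(r/2), Real.exp (-s ^ 2 / (2 * σ ^ 2)) := by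
    have := intervalIntegral.integral_comp_mul_left
      (fun s => Real.exp (-s ^ 2 / (2 * σ ^ 2))) (a := -(1/2)) (b := 1/2) (ne_of_gt hr)
    simp only [smul_eq_mul] at this
    rw [show r * (-(1/2)) = -(r/2) by ring, show r * (1/2) = r/2 by ring] at this
    rw [← this]
  have h2 : (∫ s in (-(r/2))..(r/2), Real.exp (-s ^ 2 / (2 * σ ^ 2)))
      = c * ∫ u in (-x₀)..x₀, Real.exp (-u ^ 2) := by
    have key := intervalIntegral.integral_comp_mul_left
      (fun s => Real.exp (-s ^ 2 / (2 * σ ^ 2))) (a := -x₀) (b := x₀) (ne_of_gt hcpos)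
    simp only [smul_eq_mul] at key
    have e1 : c * (-x₀) = -(r/2) := by rw [hc, hx₀]; field_simp
    have e2 : c * x₀ = r/2 := by rw [hc, hx₀]; field_simp
    have e3 : ∀ x : ℝ, Real.exp (-(c * x) ^ 2 / (2 * σ ^ 2)) = Real.exp (-x ^ 2) := by
      intro x
      congr 1
      rw [mul_pow, hcsq]
      field_simp
    rw [e1, e2] at key
    simp only [e3] at key
    rw [key, ← mul_assoc, mul_inv_cancel₀ (ne_of_gt hcpos), one_mul]
  have h3 : (∫ u in (-x₀)..x₀, Real.exp (-u ^ 2)) = 2 * ∫ u in (0:ℝ)..x₀, Real.exp (-u ^ 2) := by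
    have hsplit : (∫ u in (-x₀)..x₀, Real.exp (-u ^ 2))
        = (∫ u in (-x₀)..(0:ℝ), Real.exp (-u ^ 2)) + ∫ u in (0:ℝ)..x₀, Real.exp (-u ^ 2) :=
      (intervalIntegral.integral_add_adjacent_intervals
        ((by continuity : Continuous fun u : ℝ => Real.exp (-u ^ 2)).intervalIntegrable _ _)
        ((by continuity : Continuous fun u : ℝ => Real.exp (-u ^ 2)).intervalIntegrable _ _)).symm
    have hneg : (∫ u in (-x₀)..(0:ℝ), Real.exp (-u ^ 2))
        = ∫ u in (0:ℝ)..x₀, Real.exp (-u ^ 2) := by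
      have h := intervalIntegral.integral_comp_neg (a := (0:ℝ)) (b := x₀)
        (fun u => Real.exp (-u ^ 2))
      simpa using h.symm
    rw [hsplit, hneg]; ring
  rw [icc_ii, h1, h2, h3, phi, erf, ← hx₀]
  have hsqpi : Real.sqrt (2 * Real.pi) = Real.sqrt 2 * Real.sqrt Real.pi :=
    Real.sqrt_mul (by norm_num) _
  field_simp [hc, hsqpi]
  rw [hsqpi]; ring

lemma cont_aux {m : ℕ} (M : Matrix (Fin m) (Fin m) ℝ) :
    Continuous fun ξ : Fin m → ℝ => ∑ i, (M.mulVec ξ i) ^ 2 := by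
  apply continuous_finset_sum
  intro i _
  apply Continuous.pow
  simp only [Matrix.mulVec, dotProduct]
  exact continuous_finset_sum _ fun j _ => continuous_const.mul (continuous_apply j)

lemma key (σ : ℝ) (hσ : 0 < σ) : ∀ (n : ℕ) (R : Matrix (Fin n) (Fin n) ℝ),
    R.BlockTriangular id → (∀ i, 0 < R i i) →
    (∫ ξ in Set.univ.pi (fun _ : Fin n => Set.Icc (-(1/2):ℝ) (1/2)),
        Real.exp (-(∑ i, (R.mulVec ξ i) ^ 2) / (2 * σ ^ 2)))
      ≤ ∏ i, ∫ t in Set.Icc (-(1/2):ℝ) (1/2), Real.exp (-(R i i * t) ^ 2 / (2 * σ ^ 2)) := by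
  intro n
  induction n with
  | zero =>
      intro R hR hd
      simp
      simp [measureReal_def, Real.volume_Icc_pi]
  | succ n ih =>
      intro R hR hd
      set Box : Set (Fin n → ℝ) := Set.univ.pi (fun _ => Set.Icc (-(1/2):ℝ) (1/2)) with hBox
      set Icc2 : Set ℝ := Set.Icc (-(1/2):ℝ) (1/2) with hIcc2
      set R' : Matrix (Fin n) (Fin n) ℝ := R.submatrix Fin.succ Fin.succ with hR'
      have hR'tri : R'.BlockTriangular id := by
        intro i j hij
        exact hR (by simpa using hij : (id (Fin.succ j) : Fin (n+1)) < id (Fin.succ i))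
      have hR'd : ∀ i, 0 < R' i i := fun i => hd i.succ
      set B : (Fin n → ℝ) → ℝ := fun ξ' => ∑ j, R 0 j.succ * ξ' j with hB
      set g : ℝ × (Fin n → ℝ) → ℝ := fun p =>
        Real.exp (-(R 0 0 * p.1 + B p.2) ^ 2 / (2 * σ ^ 2)) *
        Real.exp (-(∑ i, (R'.mulVec p.2 i) ^ 2) / (2 * σ ^ 2)) with hg
      -- the decomposition of the integrand
      have hdecomp : ∀ x : Fin (n+1) → ℝ,
          Real.exp (-(∑ i, (R.mulVec x i) ^ 2) / (2 * σ ^ 2)) = g (x 0, fun j => x j.succ) := by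
        intro x
        rw [hg]
        dsimp only
        rw [← Real.exp_add]
        congr 1
        have h0 : R.mulVec x 0 = R 0 0 * x 0 + B (fun j => x j.succ) := by
          simp [Matrix.mulVec, dotProduct, Fin.sum_univ_succ, hB]
        have hs : ∀ i : Fin n, R.mulVec x i.succ = R'.mulVec (fun j => x j.succ) i := by
          intro i
          have hz : R i.succ 0 = 0 := hR (by simp [Fin.succ_pos])
          simp [Matrix.mulVec, dotProduct, Fin.sum_univ_succ, hz, hR', Matrix.submatrix_apply]
        rw [Fin.sum_univ_succ, h0]
        simp only [hs]
        ring
      -- continuity of g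
      have hgc : Continuous g := by
        apply Continuous.mul
        · apply Real.continuous_exp.comp
          apply Continuous.div_const
          apply Continuous.neg
          apply Continuous.pow
          exact (continuous_const.mul continuous_fst).add
            ((continuous_finset_sum _ fun j _ =>
              continuous_const.mul ((continuous_apply j).comp continuous_snd)))
        · exact Real.continuous_exp.comp
            (((cont_aux R').comp continuous_snd).neg.div_const _)
      -- g is nonneg and bounded by 1... we need integrability on Icc2 ×ˢ Box
      have hBoxmeas : MeasurableSet Box := MeasurableSet.univ_pi fun _ => measurableSet_Icc
      have hSfin : (volume : Measure (ℝ × (Fin n → ℝ))) (Icc2 ×ˢ Box) ≠ ⊤ := by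
        rw [Measure.volume_eq_prod, Measure.prod_prod]
        refine ENNReal.mul_ne_top ?_ ?_
        · simp [hIcc2]
        · rw [hBox, volume_pi_pi]
          exact (ENNReal.prod_lt_top fun i _ => by
            rw [Real.volume_Icc]; exact ENNReal.ofReal_lt_top).ne
      have hgint : IntegrableOn g (Icc2 ×ˢ Box) volume := by
        apply Measure.integrableOn_of_bounded hSfin hgc.aestronglyMeasurable
        · refine Filter.Eventually.of_forall fun p => ?_
          rw [Real.norm_eq_abs, abs_of_pos (by positivity), hg]
          have h1 : Real.exp (-(R 0 0 * p.1 + B p.2) ^ 2 / (2 * σ ^ 2)) ≤ 1 := by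
            rw [← Real.exp_zero]
            apply Real.exp_le_exp.mpr
            have : (0:ℝ) ≤ (R 0 0 * p.1 + B p.2) ^ 2 := sq_nonneg _
            have h2σ : (0:ℝ) < 2 * σ ^ 2 := by positivity
            apply div_nonpos_of_nonpos_of_nonneg (by linarith) (le_of_lt h2σ)
          have h2 : Real.exp (-(∑ i, (R'.mulVec p.2 i) ^ 2) / (2 * σ ^ 2)) ≤ 1 := by
            rw [← Real.exp_zero]
            apply Real.exp_le_exp.mpr
            have : (0:ℝ) ≤ ∑ i, (R'.mulVec p.2 i) ^ 2 :=
              Finset.sum_nonneg fun i _ => sq_nonneg _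
            have h2σ : (0:ℝ) < 2 * σ ^ 2 := by positivity
            apply div_nonpos_of_nonpos_of_nonneg (by linarith) (le_of_lt h2σ)
          calc Real.exp _ * Real.exp _ ≤ 1 * 1 :=
                mul_le_mul h1 h2 (le_of_lt (Real.exp_pos _)) zero_le_one
            _ = 1 := by ring
      -- change of variables
      have hchg : (∫ ξ in Set.univ.pi (fun _ : Fin (n+1) => Set.Icc (-(1/2):ℝ) (1/2)),
            Real.exp (-(∑ i, (R.mulVec ξ i) ^ 2) / (2 * σ ^ 2)))
          = ∫ p in Icc2 ×ˢ Box, g p := by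
        have hmp := volume_preserving_piFinSuccAbove (fun _ : Fin (n+1) => ℝ) 0
        have h := hmp.setIntegral_preimage_emb
          (MeasurableEquiv.measurableEmbedding _) g (Icc2 ×ˢ Box)
        have hpre : (MeasurableEquiv.piFinSuccAbove (fun _ : Fin (n+1) => ℝ) 0) ⁻¹' (Icc2 ×ˢ Box)
            = Set.univ.pi (fun _ : Fin (n+1) => Set.Icc (-(1/2):ℝ) (1/2)) := by
          ext x
          simp only [MeasurableEquiv.piFinSuccAbove, MeasurableEquiv.coe_mk,
            Set.mem_preimage, Set.mem_prod, Set.mem_pi, Set.mem_univ, true_implies]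
          constructor
          · rintro ⟨h0, hs⟩ i
            induction i using Fin.cases with
            | zero => exact h0
            | succ j => simpa [Fin.zero_succAbove, Fin.tail] using hs j
          · intro hall
            exact ⟨hall 0, fun j => by simpa [Fin.zero_succAbove, Fin.tail] using hall j.succ⟩
        rw [← hpre]
        rw [← h]
        congr 1 with x
        rw [hdecomp x]
        congr 1
      -- iterated integral
      have hgint' : Integrable g ((volume.restrict Icc2).prod (volume.restrict Box)) := by
        rwa [Measure.prod_restrict, ← Measure.volume_eq_prod]
      have hiter : (∫ p in Icc2 ×ˢ Box, g p)
          = ∫ ξ' in Box, ∫ t in Icc2, g (t, ξ') := by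
        rw [Measure.volume_eq_prod, ← Measure.prod_restrict]
        exact integral_prod_symm g hgint'
      -- the one-dimensional integrals
      set I : ℝ → ℝ := fun a => ∫ t in Icc2, Real.exp (-(a * t) ^ 2 / (2 * σ ^ 2)) with hI
      have hInonneg : ∀ a, 0 ≤ I a := fun a =>
        setIntegral_nonneg measurableSet_Icc fun t _ => le_of_lt (Real.exp_pos _)
      -- bound the inner integral
      have hinner : ∀ ξ' : Fin n → ℝ,
          (∫ t in Icc2, g (t, ξ'))
            ≤ I (R 0 0) * Real.exp (-(∑ i, (R'.mulVec ξ' i) ^ 2) / (2 * σ ^ 2)) := by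
        intro ξ'
        have : (∫ t in Icc2, g (t, ξ'))
            = (∫ t in Icc2, Real.exp (-(R 0 0 * t + B ξ') ^ 2 / (2 * σ ^ 2))) *
              Real.exp (-(∑ i, (R'.mulVec ξ' i) ^ 2) / (2 * σ ^ 2)) := by
          rw [← integral_mul_const]
        rw [this]
        apply mul_le_mul_of_nonneg_right _ (le_of_lt (Real.exp_pos _))
        exact shift' σ hσ (R 0 0) (hd 0) (B ξ')
      -- integrability of both sides of the outer comparison
      have hmargint : IntegrableOn (fun ξ' => ∫ t in Icc2, g (t, ξ')) Box volume :=
        hgint'.integral_prod_right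
      have hexpint : IntegrableOn
          (fun ξ' : Fin n → ℝ => Real.exp (-(∑ i, (R'.mulVec ξ' i) ^ 2) / (2 * σ ^ 2)))
          Box volume := by
        apply Measure.integrableOn_of_bounded (M := 1)
        · rw [hBox, volume_pi_pi]
          exact (ENNReal.prod_lt_top fun i _ => by
            rw [Real.volume_Icc]; exact ENNReal.ofReal_lt_top).ne
        · exact (Real.continuous_exp.comp ((cont_aux R').neg.div_const _)).aestronglyMeasurable
        · refine Filter.Eventually.of_forall fun ξ' => ?_
          rw [Real.norm_eq_abs, abs_of_pos (Real.exp_pos _), ← Real.exp_zero]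
          apply Real.exp_le_exp.mpr
          have h1 : (0:ℝ) ≤ ∑ i, (R'.mulVec ξ' i) ^ 2 := Finset.sum_nonneg fun i _ => sq_nonneg _
          have h2σ : (0:ℝ) < 2 * σ ^ 2 := by positivity
          apply div_nonpos_of_nonpos_of_nonneg (by linarith) (le_of_lt h2σ)
      -- the outer comparison
      have houter : (∫ ξ' in Box, ∫ t in Icc2, g (t, ξ'))
          ≤ I (R 0 0) * ∫ ξ' in Box,
              Real.exp (-(∑ i, (R'.mulVec ξ' i) ^ 2) / (2 * σ ^ 2)) := by
        rw [← integral_const_mul]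
        apply setIntegral_mono_on hmargint (hexpint.const_mul _) hBoxmeas
        intro ξ' _
        exact hinner ξ'
      -- apply the induction hypothesis
      have hfinal : (I (R 0 0)) * (∫ ξ' in Box,
            Real.exp (-(∑ i, (R'.mulVec ξ' i) ^ 2) / (2 * σ ^ 2)))
          ≤ I (R 0 0) * ∏ i, I (R' i i) := by
        apply mul_le_mul_of_nonneg_left _ (hInonneg _)
        exact ih R' hR'tri hR'd
      calc (∫ ξ in Set.univ.pi (fun _ : Fin (n+1) => Set.Icc (-(1/2):ℝ) (1/2)),
            Real.exp (-(∑ i, (R.mulVec ξ i) ^ 2) / (2 * σ ^ 2)))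
          = ∫ ξ' in Box, ∫ t in Icc2, g (t, ξ') := by rw [hchg, hiter]
        _ ≤ I (R 0 0) * ∏ i, I (R' i i) := le_trans houter hfinal
        _ = ∏ i, I (R i i) := by
            rw [Fin.prod_univ_succ]
            congr 1


/-- `P^OR ≤ P^OB`: the success probability of the ordinary rounding detector
is at most that of the ordinary Babai detector. -/
theorem stmt_5 (n : ℕ) (σ : ℝ) (hσ : 0 < σ)
    (R : Matrix (Fin n) (Fin n) ℝ) (hR : R.BlockTriangular id)
    (hd : ∀ i, 0 < R i i) :
    (R.det / (Real.sqrt (2 * Real.pi) * σ) ^ n) *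
        ∫ ξ in Set.univ.pi (fun _ : Fin n => Set.Icc (-(1 / 2) : ℝ) (1 / 2)),
          Real.exp (-(∑ i, (R.mulVec ξ i) ^ 2) / (2 * σ ^ 2))
      ≤ ∏ i, phi σ (R i i) := by
  have hdet : R.det = ∏ i, R i i := Matrix.det_of_upperTriangular hR
  have hkey := key σ hσ n R hR hd
  set s : ℝ := Real.sqrt (2 * Real.pi) * σ with hs
  have hspos : 0 < s := mul_pos (Real.sqrt_pos.mpr (by positivity)) hσ
  have hprodpos : 0 < ∏ i, R i i := Finset.prod_pos fun i _ => hd i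
  have hconst : 0 ≤ R.det / s ^ n := by
    rw [hdet]
    positivity
  calc (R.det / s ^ n) *
        ∫ ξ in Set.univ.pi (fun _ : Fin n => Set.Icc (-(1 / 2) : ℝ) (1 / 2)),
          Real.exp (-(∑ i, (R.mulVec ξ i) ^ 2) / (2 * σ ^ 2))
      ≤ (R.det / s ^ n) *
          ∏ i, ∫ t in Set.Icc (-(1/2):ℝ) (1/2), Real.exp (-(R i i * t) ^ 2 / (2 * σ ^ 2)) :=
        mul_le_mul_of_nonneg_left hkey hconst
    _ = ∏ i, (R i i / s) *
          ∫ t in Set.Icc (-(1/2):ℝ) (1/2), Real.exp (-(R i i * t) ^ 2 / (2 * σ ^ 2)) := by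
        rw [Finset.prod_mul_distrib, Finset.prod_div_distrib, Finset.prod_const,
          Finset.card_univ, Fintype.card_fin, hdet]
    _ = ∏ i, phi σ (R i i) :=
        Finset.prod_congr rfl fun i _ => phi_eq σ hσ (R i i) (hd i)
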